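/- Let W : Δ_{[a,b]} → [0,∞) be a superadditive control (i.e. W_{s,u} + W_{u,t} ≤ W_{s,t} for s ≤ u ≤ t) with W continuous and W_{s,s} = 0. Fix χ > 0 and exponent p > 0. Define greedy times τ₀ := a and τ_{n+1} := sup{τ ∈ [τ_n, b] : W_{τ_n,τ}^{1/p} ≤ χ}, and let N := inf{n > 0 : τ_n = b} be the number of greedy steps. Then N ≤ W_{a,b} · χ^{-p} + 1. -/
import Mathlib


/-- Greedy time estimate: for a continuous superadditive control `W` on `[a,b]` with
`W s s = 0`, the number `N` of greedy time steps with threshold `χ` (for the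
exponent `p`) satisfies `N ≤ W_{a,b} · χ^{-p} + 1`. -/
theorem greedy_times_bound (a b : ℝ) (hab : a ≤ b)
    (W : ℝ → ℝ → ℝ)
    (hWnonneg : ∀ s u, a ≤ s → s ≤ u → u ≤ b → 0 ≤ W s u)
    (hWsuper : ∀ s u t, a ≤ s → s ≤ u → u ≤ t → t ≤ b → W s u + W u t ≤ W s t)
    (hWcont : Continuous fun p : ℝ × ℝ => W p.1 p.2)
    (hWdiag : ∀ s, a ≤ s → s ≤ b → W s s = 0)
    (χ p : ℝ) (hχ : 0 < χ) (hp : 0 < p)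
    (τ : ℕ → ℝ) (hτ0 : τ 0 = a)
    (hτ : ∀ n : ℕ, τ (n + 1) = sSup {u : ℝ | u ∈ Set.Icc (τ n) b ∧ (W (τ n) u) ^ (1 / p) ≤ χ})
    (N : ℕ) (hN : N = sInf {n : ℕ | 0 < n ∧ τ n = b}) :
    (N : ℝ) ≤ W a b * χ ^ (-p) + 1 := by
  have hχp : (0:ℝ) < χ ^ p := Real.rpow_pos_of_pos hχ p
  have hWab : 0 ≤ W a b := hWnonneg a b le_rfl hab le_rfl
  have hrhs0 : (0:ℝ) ≤ W a b * χ ^ (-p) :=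
    mul_nonneg hWab (Real.rpow_nonneg hχ.le _)
  -- The main step analysis
  have main : ∀ n, a ≤ τ n → τ n ≤ b →
      τ n ≤ τ (n+1) ∧ τ (n+1) ≤ b ∧ W (τ n) (τ (n+1)) ≤ χ ^ p ∧
        (τ (n+1) < b → χ ^ p ≤ W (τ n) (τ (n+1))) := by
    intro n ha hb
    set S : Set ℝ := {u : ℝ | u ∈ Set.Icc (τ n) b ∧ W (τ n) u ≤ χ ^ p} with hS
    have hSeq : {u : ℝ | u ∈ Set.Icc (τ n) b ∧ (W (τ n) u) ^ (1 / p) ≤ χ} = S := by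
      ext u
      simp only [hS, Set.mem_setOf_eq, and_congr_right_iff]
      intro hu
      rw [one_div, Real.rpow_inv_le_iff_of_pos
        (hWnonneg _ _ ha hu.1 hu.2) hχ.le hp]
    have hτn1 : τ (n+1) = sSup S := by rw [hτ n, hSeq]
    have hWn2 : Continuous fun u => W (τ n) u :=
      hWcont.comp (Continuous.prodMk_right (τ n))
    have hSclosed : IsClosed S :=
      isClosed_Icc.inter (isClosed_le hWn2 continuous_const)
    have hSne : S.Nonempty := ⟨τ n, ⟨le_rfl, hb⟩, by
      rw [hWdiag _ ha hb]; exact hχp.le⟩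
    have hSbdd : BddAbove S := ⟨b, fun u hu => hu.1.2⟩
    have hmem : τ (n+1) ∈ S := by
      rw [hτn1]; exact hSclosed.csSup_mem hSne hSbdd
    refine ⟨hmem.1.1, hmem.1.2, hmem.2, ?_⟩
    intro hlt
    by_contra hcon
    push_neg at hcon
    have hct : ContinuousAt (fun u => W (τ n) u) (τ (n+1)) := hWn2.continuousAt
    have h1 : ∀ᶠ u in nhds (τ (n+1)), W (τ n) u < χ ^ p :=
      hct.eventually_lt continuousAt_const hcon
    have h2 : ∀ᶠ u in nhdsWithin (τ (n+1)) (Set.Ioi (τ (n+1))), W (τ n) u < χ ^ p :=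
      nhdsWithin_le_nhds h1
    have h3 : Set.Ioo (τ (n+1)) b ∈ nhdsWithin (τ (n+1)) (Set.Ioi (τ (n+1))) :=
      Ioo_mem_nhdsGT_of_mem ⟨le_rfl, hlt⟩
    obtain ⟨u, hu1, hu2⟩ := (h2.and (Filter.eventually_of_mem h3 (fun u hu => hu))).exists
    have huS : u ∈ S := ⟨⟨hmem.1.1.trans hu2.1.le, hu2.2.le⟩, hu1.le⟩
    have : u ≤ τ (n+1) := by rw [hτn1]; exact le_csSup hSbdd huS
    exact absurd this (not_le.mpr hu2.1)
  -- bounds and monotonicity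
  have hbd : ∀ n, a ≤ τ n ∧ τ n ≤ b := by
    intro n
    induction n with
    | zero => exact ⟨le_of_eq hτ0.symm, hτ0 ▸ hab⟩
    | succ k ih =>
      obtain ⟨h1, h2, _, _⟩ := main k ih.1 ih.2
      exact ⟨ih.1.trans h1, h2⟩
  have hmono : Monotone τ :=
    monotone_nat_of_le_succ fun n => (main n (hbd n).1 (hbd n).2).1
  -- sum bound via superadditivity
  have hsum : ∀ k, (∑ j ∈ Finset.range k, W (τ j) (τ (j+1))) ≤ W a (τ k) := by
    intro k
    induction k with
    | zero => simp [hτ0, hWdiag a le_rfl hab]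
    | succ m ih =>
      rw [Finset.sum_range_succ]
      calc (∑ j ∈ Finset.range m, W (τ j) (τ (j+1))) + W (τ m) (τ (m+1))
          ≤ W a (τ m) + W (τ m) (τ (m+1)) := by linarith
        _ ≤ W a (τ (m+1)) := by
            have := hτ0 ▸ (hbd m).1
            exact hWsuper a (τ m) (τ (m+1)) le_rfl (hbd m).1
              (main m (hbd m).1 (hbd m).2).1 (hbd (m+1)).2
  rcases Set.eq_empty_or_nonempty {n : ℕ | 0 < n ∧ τ n = b} with he | hne
  · rw [hN, he, Nat.sInf_empty]; push_cast; linarith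
  have hNmem : 0 < N ∧ τ N = b := hN ▸ Nat.sInf_mem hne
  -- each intermediate step has weight at least χ^p
  have hbig : ∀ j, j + 1 < N → χ ^ p ≤ W (τ j) (τ (j+1)) := by
    intro j hj
    have hnot : j + 1 ∉ {n : ℕ | 0 < n ∧ τ n = b} :=
      Nat.notMem_of_lt_sInf (hN ▸ hj)
    have hne' : τ (j+1) ≠ b := fun h => hnot ⟨Nat.succ_pos j, h⟩
    exact (main j (hbd j).1 (hbd j).2).2.2.2 (lt_of_le_of_ne (hbd (j+1)).2 hne')
  -- lower bound the sum
  have hcard : ((N - 1 : ℕ) : ℝ) * χ ^ p ≤ ∑ j ∈ Finset.range (N-1), W (τ j) (τ (j+1)) := by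
    calc ((N - 1 : ℕ) : ℝ) * χ ^ p = ∑ _j ∈ Finset.range (N-1), χ ^ p := by
          rw [Finset.sum_const, Finset.card_range, nsmul_eq_mul]
      _ ≤ ∑ j ∈ Finset.range (N-1), W (τ j) (τ (j+1)) := by
          apply Finset.sum_le_sum
          intro j hj
          exact hbig j (by have := Finset.mem_range.mp hj; omega)
  have hWa : W a (τ (N-1)) ≤ W a b := by
    have h1 := hWsuper a (τ (N-1)) b le_rfl (hbd (N-1)).1 (hbd (N-1)).2 le_rfl
    have h2 := hWnonneg (τ (N-1)) b (hbd (N-1)).1 (hbd (N-1)).2 le_rfl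
    linarith
  have hkey : ((N - 1 : ℕ) : ℝ) * χ ^ p ≤ W a b :=
    hcard.trans ((hsum (N-1)).trans hWa)
  have hinv : χ ^ (-p) = (χ ^ p)⁻¹ := Real.rpow_neg hχ.le p
  have : ((N - 1 : ℕ) : ℝ) ≤ W a b * χ ^ (-p) := by
    rw [hinv, ← div_eq_mul_inv, le_div_iff₀ hχp]
    exact hkey
  have hcast : ((N - 1 : ℕ) : ℝ) = (N : ℝ) - 1 := by
    have := hNmem.1; push_cast [Nat.cast_sub this]; ring
  linarith [hcast ▸ this]
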